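/- For an n×n matrix A over ℂ and a random vector X ∈ ℂⁿ whose coordinates are independent and uniformly distributed on the unit circle {z : |z| = 1}, the permanent of A equals the expectation E[∏_{i=1}^n (conj(X_i) · Y_i)], where Y = A X. -/

import Mathlib

open MeasureTheory

/-- The permanent of a complex square matrix. -/
noncomputable def perm {n : ℕ} (A : Matrix (Fin n) (Fin n) ℂ) : ℂ :=
  ∑ σ : Equiv.Perm (Fin n), ∏ i, A i (σ i)

/-- The operator 2-norm of a complex square matrix. -/
noncomputable def opNorm {n : ℕ} (A : Matrix (Fin n) (Fin n) ℂ) : ℝ :=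
  ‖LinearMap.toContinuousLinearMap (Matrix.toEuclideanLin A)‖

/-- Uniform probability measure parametrizing `n` i.i.d. points of the unit circle. -/
noncomputable def circleMeasure (n : ℕ) : Measure (Fin n → ℝ) :=
  Measure.pi fun _ => volume.restrict (Set.Icc 0 1)

/-- The random vector with i.i.d. coordinates uniform on the unit circle. -/
noncomputable def Xc {n : ℕ} (θ : Fin n → ℝ) : Fin n → ℂ :=
  fun i => Complex.exp (2 * Real.pi * Complex.I * (θ i))

/-! ### Auxiliary machinery -/

/-- Type synonym for `ℝ` whose `volume` is Lebesgue measure restricted to `[0,1]`. -/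
def UI : Type := ℝ

noncomputable instance : MeasureSpace UI :=
  { toMeasurableSpace := inferInstanceAs (MeasurableSpace ℝ),
    volume := (volume : Measure ℝ).restrict (Set.Icc 0 1) }

instance : IsFiniteMeasure (volume : Measure UI) := by
  constructor
  show (volume : Measure ℝ).restrict (Set.Icc 0 1) Set.univ < ⊤
  rw [Measure.restrict_apply_univ]
  simp

/-- The basic character `t ↦ exp(2πi t m)`. -/
noncomputable def gg (m : ℤ) (t : ℝ) : ℂ := Complex.exp (2 * Real.pi * Complex.I * t * m)

lemma gg_integrable (m : ℤ) : Integrable (fun t : UI => gg m t) := by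
  show IntegrableOn (fun t : ℝ => gg m t) (Set.Icc 0 1) volume
  apply Continuous.integrableOn_Icc
  unfold gg
  fun_prop

lemma gg_integral (m : ℤ) :
    (∫ t : UI, gg m t) = if m = 0 then 1 else 0 := by
  have : (∫ t : UI, gg m t) = ∫ t in Set.Icc (0:ℝ) 1, gg m t := rfl
  rw [this]
  split_ifs with h
  · subst h
    simp only [gg, Int.cast_zero, mul_zero, Complex.exp_zero]
    rw [integral_const]
    simp
  · rw [MeasureTheory.integral_Icc_eq_integral_Ioc,
      ← intervalIntegral.integral_of_le (by norm_num : (0:ℝ) ≤ 1)]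
    have hc : (2 * Real.pi * Complex.I * m : ℂ) ≠ 0 := by
      simp [Real.pi_ne_zero, Complex.I_ne_zero, h]
    have hI := integral_exp_mul_complex (a := 0) (b := 1) hc
    simp only [gg]
    have heq : ∀ t : ℝ, (2 * Real.pi * Complex.I * t * m : ℂ)
        = (2 * Real.pi * Complex.I * m) * t := by intro t; ring
    simp_rw [heq]
    rw [hI]
    push_cast [mul_one, mul_zero, Complex.exp_zero]
    have h1 : Complex.exp (2 * Real.pi * Complex.I * m) = 1 := by
      have := Complex.exp_int_mul_two_pi_mul_I m
      rw [← this]; congr 1; ring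
    rw [h1, sub_self, zero_div]

/-- Number of preimages of `j` under `f`. -/
def cnt {n : ℕ} (f : Fin n → Fin n) (j : Fin n) : ℕ :=
  (Finset.univ.filter fun i => f i = j).card

lemma conj_mul_pow (t : ℝ) (c : ℕ) :
    (starRingEnd ℂ) (Complex.exp (2 * Real.pi * Complex.I * t)) *
      (Complex.exp (2 * Real.pi * Complex.I * t)) ^ c = gg ((c : ℤ) - 1) t := by
  rw [← Complex.exp_conj, ← Complex.exp_nat_mul, ← Complex.exp_add]
  unfold gg
  congr 1
  simp only [map_mul, Complex.conj_I, Complex.conj_ofReal, map_ofNat]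
  push_cast
  ring

lemma bij_iff_cnt {n : ℕ} (f : Fin n → Fin n) :
    Function.Bijective f ↔ ∀ j, cnt f j = 1 := by
  constructor
  · intro hf j
    have : (Finset.univ.filter fun i => f i = j) = {(Equiv.ofBijective f hf).symm j} := by
      ext i
      simp only [Finset.mem_filter, Finset.mem_univ, true_and, Finset.mem_singleton]
      rw [Equiv.eq_symm_apply]
      exact Iff.rfl
    rw [cnt, this, Finset.card_singleton]
  · intro h
    rw [Fintype.bijective_iff_injective_and_card]
    refine ⟨fun a b hab => ?_, rfl⟩
    have h1 := h (f b)
    have hle := Finset.card_le_one.mp (le_of_eq h1)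
    exact hle a (by simp [hab]) b (by simp)

lemma prod_fiber_pow {n : ℕ} (f : Fin n → Fin n) (x : Fin n → ℂ) :
    (∏ i, x (f i)) = ∏ j, x j ^ cnt f j := by
  rw [← Finset.prod_fiberwise' Finset.univ f x]
  exact Finset.prod_congr rfl fun j _ => by rw [Finset.prod_const, cnt]

lemma pointwise {n : ℕ} (A : Matrix (Fin n) (Fin n) ℂ) (θ : Fin n → ℝ) :
    (∏ i, (starRingEnd ℂ) (Xc θ i) * (A.mulVec (Xc θ)) i)
      = ∑ f ∈ Fintype.piFinset (fun _ : Fin n => (Finset.univ : Finset (Fin n))),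
          (∏ i, A i (f i)) * ∏ j, gg ((cnt f j : ℤ) - 1) (θ j) := by
  have step1 : (∏ i, (starRingEnd ℂ) (Xc θ i) * (A.mulVec (Xc θ)) i)
      = ∏ i, ∑ j, A i j * ((starRingEnd ℂ) (Xc θ i) * Xc θ j) := by
    refine Finset.prod_congr rfl fun i _ => ?_
    rw [Matrix.mulVec, dotProduct, Finset.mul_sum]
    exact Finset.sum_congr rfl fun j _ => by ring
  rw [step1, Finset.prod_univ_sum]
  refine Finset.sum_congr rfl fun f _ => ?_
  rw [Finset.prod_mul_distrib]
  congr 1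
  rw [Finset.prod_mul_distrib]
  have : (∏ i, Xc θ (f i)) = ∏ j, (Xc θ j) ^ cnt f j := prod_fiber_pow f (Xc θ)
  rw [this, ← Finset.prod_mul_distrib]
  exact Finset.prod_congr rfl fun j _ => conj_mul_pow (θ j) (cnt f j)

lemma sum_perm {n : ℕ} (A : Matrix (Fin n) (Fin n) ℂ) :
    ∑ f ∈ Fintype.piFinset (fun _ : Fin n => (Finset.univ : Finset (Fin n))),
        (∏ i, A i (f i)) * (if ∀ j, cnt f j = 1 then (1:ℂ) else 0)
      = ∑ σ : Equiv.Perm (Fin n), ∏ i, A i (σ i) := by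
  rw [Fintype.piFinset_univ]
  simp_rw [mul_ite, mul_one, mul_zero]
  rw [← Finset.sum_filter]
  symm
  refine Finset.sum_bij' (fun σ _ => (σ : Fin n → Fin n))
    (fun f hf => Equiv.ofBijective f ((bij_iff_cnt f).mpr (Finset.mem_filter.mp hf).2))
    ?_ ?_ ?_ ?_ ?_
  · intro σ _
    exact Finset.mem_filter.mpr ⟨Finset.mem_univ _, (bij_iff_cnt σ).mp σ.bijective⟩
  · intro f hf; exact Finset.mem_univ _
  · intro σ _; ext i; simp [Equiv.ofBijective]
  · intro f hf; rfl
  · intro σ _; rfl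

/-- Glynn estimator identity over ℂ: the permanent equals the expectation of
`∏ i, conj (X i) * (A X) i` for X i.i.d. uniform on the unit circle. -/
theorem glynn_identity_complex {n : ℕ} (A : Matrix (Fin n) (Fin n) ℂ) :
    perm A =
      ∫ θ, (∏ i, (starRingEnd ℂ) (Xc θ i) * (A.mulVec (Xc θ)) i) ∂(circleMeasure n) := by
  have hmeas : circleMeasure n = (volume : Measure (Fin n → UI)) := rfl
  show perm A = ∫ θ : Fin n → UI,
    (∏ i, (starRingEnd ℂ) (Xc θ i) * (A.mulVec (Xc θ)) i) ∂volume
  have hfun : (fun θ : Fin n → UI => ∏ i, (starRingEnd ℂ) (Xc θ i) * (A.mulVec (Xc θ)) i)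
      = fun θ => ∑ f ∈ Fintype.piFinset (fun _ : Fin n => (Finset.univ : Finset (Fin n))),
          (∏ i, A i (f i)) * ∏ j, gg ((cnt f j : ℤ) - 1) (θ j) :=
    funext fun θ => pointwise A θ
  rw [hfun]
  have hInt : ∀ (m : Fin n → ℤ),
      Integrable (fun θ : Fin n → UI => ∏ j, gg (m j) (θ j)) volume :=
    fun m => Integrable.fintype_prod (f := fun j (t : UI) => gg (m j) t) fun j => gg_integrable (m j)
  rw [integral_finset_sum _ (fun f _ => ((hInt fun j => (cnt f j : ℤ) - 1)).const_mul _)]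
  simp_rw [MeasureTheory.integral_const_mul]
  have hprod : ∀ f : Fin n → Fin n,
      (∫ θ : Fin n → UI, ∏ j, gg ((cnt f j : ℤ) - 1) (θ j))
        = if ∀ j, cnt f j = 1 then (1:ℂ) else 0 := by
    intro f
    rw [MeasureTheory.integral_fintype_prod_volume_eq_prod
      (f := fun j (t : UI) => gg ((cnt f j : ℤ) - 1) t)]
    have : ∀ j, (∫ t : UI, gg ((cnt f j : ℤ) - 1) t)
        = if cnt f j = 1 then (1:ℂ) else 0 := by
      intro j
      rw [gg_integral]
      congr 1
      simp only [eq_iff_iff]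
      omega
    simp_rw [this]
    by_cases h : ∀ j, cnt f j = 1
    · simp [h]
    · push_neg at h
      obtain ⟨j0, hj0⟩ := h
      rw [if_neg (by push_neg; exact ⟨j0, hj0⟩)]
      exact Finset.prod_eq_zero (Finset.mem_univ j0) (by rw [if_neg hj0])
  simp_rw [hprod]
  exact (sum_perm A).symm
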